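/- Consider the online uniform label noise model with noise rate ε ∈ (0,1) and α ∈ (0,1), and for each t ≥ 1 let τ̂_t be a real-valued F_{t−1}-measurable random variable. Then almost surely, the conditional expectation of the robust pinball subgradient equals the conditional expectation of the clean pinball subgradient: E[ g̃(τ̂_t, S̃_t, (S_{t,y})_{y=1}^K) | F_{t−1} ] = E[ 1{S_t ≤ τ̂_t} − (1−α) | F_{t−1} ]; in particular this conditional expectation takes values in [α−1, α]. -/

import Mathlib

open MeasureTheory ProbabilityTheory

lemma meas_eval {K : ℕ} : Measurable (fun p : Fin K × (Fin K → ℝ) => p.2 p.1) := by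
  have h : (fun p : Fin K × (Fin K → ℝ) => p.2 p.1)
      = fun p => ∑ y : Fin K, if p.1 = y then p.2 y else 0 := by
    funext p; simp
  rw [h]
  exact Finset.measurable_sum _ fun y _ => Measurable.ite
    (measurable_fst (measurableSet_singleton y))
    ((measurable_pi_apply y).comp measurable_snd) measurable_const

lemma indc_integrable {Ω : Type*} {m0 : MeasurableSpace Ω} {μ : Measure Ω} [IsFiniteMeasure μ]
    {P : Ω → Prop} [DecidablePred P] (hs : MeasurableSet {ω | P ω}) :
    Integrable (fun ω => if P ω then (1:ℝ) else 0) μ := by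
  have h : (fun ω => if P ω then (1:ℝ) else 0) = Set.indicator {ω | P ω} (fun _ => (1:ℝ)) := by
    funext ω; simp [Set.indicator_apply]
  rw [h]
  exact (integrable_const 1).indicator hs

lemma indc_setIntegral {Ω : Type*} {m0 : MeasurableSpace Ω} {μ : Measure Ω} [IsFiniteMeasure μ]
    {P : Ω → Prop} [DecidablePred P] {A : Set Ω} (hs : MeasurableSet {ω | P ω}) :
    ∫ ω in A, (if P ω then (1:ℝ) else 0) ∂μ = (μ ({ω | P ω} ∩ A)).toReal := by
  have h : (fun ω => if P ω then (1:ℝ) else 0) = Set.indicator {ω | P ω} (fun _ => (1:ℝ)) := by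
    funext ω; simp [Set.indicator_apply]
  rw [h, setIntegral_indicator hs, setIntegral_const, Set.inter_comm]
  simp
  rfl



/-- The robust pinball subgradient. -/
noncomputable def robustGrad (α ε : ℝ) (K : ℕ) (τ stil : ℝ) (s : Fin K → ℝ) : ℝ :=
  (1 / (1 - ε)) * ((if stil ≤ τ then (1:ℝ) else 0) - (1 - α))
    - (ε / ((K : ℝ) * (1 - ε))) * ∑ y : Fin K, ((if s y ≤ τ then (1:ℝ) else 0) - (1 - α))

set_option maxHeartbeats 1000000 in
/-- conditionally on F_{t-1}, the robust pinball subgradient has the same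
expectation as the clean pinball subgradient, and this conditional expectation lies in
[α − 1, α]. -/
theorem robust_grad_condexp_eq_clean_grad_condexp
    {Ω : Type*} {m0 : MeasurableSpace Ω} (μ : Measure Ω) [IsProbabilityMeasure μ]
    (F : Filtration ℕ m0)
    (K : ℕ) (hK : 1 ≤ K) (ε α : ℝ) (hε : ε ∈ Set.Ioo (0:ℝ) 1) (hα : α ∈ Set.Ioo (0:ℝ) 1)
    (S : ℕ → Fin K → Ω → ℝ) (Y : ℕ → Ω → Fin K) (U : ℕ → Ω → ℝ) (Ybar : ℕ → Ω → Fin K)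
    -- measurability of the scores and labels with respect to the filtration
    (hS_meas : ∀ t, 1 ≤ t → ∀ y, Measurable[F t] (S t y))
    (hS_range : ∀ t, 1 ≤ t → ∀ y ω, S t y ω ∈ Set.Icc (0:ℝ) 1)
    (hY_meas : ∀ t, 1 ≤ t → Measurable[F t] (Y t))
    (hU_meas : ∀ t, 1 ≤ t → Measurable[F t] (U t))
    (hYbar_meas : ∀ t, 1 ≤ t → Measurable[F t] (Ybar t))
    -- U_t is uniformly distributed on [0,1], Ȳ_t uniformly on {1,…,K}
    (hU_unif : ∀ t, 1 ≤ t → Measure.map (U t) μ = volume.restrict (Set.Icc (0:ℝ) 1))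
    (hYbar_unif : ∀ t, 1 ≤ t → ∀ y : Fin K, μ {ω | Ybar t ω = y} = (K : ENNReal)⁻¹)
    -- U_t, Ȳ_t and the σ-algebra generated by F_{t-1} together with (Y_t, S_{t,·})
    -- are mutually independent
    (hIndep : ∀ t, 1 ≤ t →
      iIndep
        ![MeasurableSpace.comap (U t) inferInstance,
          MeasurableSpace.comap (Ybar t) inferInstance,
          (F (t - 1) : MeasurableSpace Ω) ⊔
            MeasurableSpace.comap (fun ω => (Y t ω, fun y => S t y ω)) inferInstance] μ)
    -- the noisy labels
    (Ytil : ℕ → Ω → Fin K)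
    (hYtil : ∀ t, 1 ≤ t → ∀ ω, Ytil t ω = if ε ≤ U t ω then Y t ω else Ybar t ω)
    -- thresholds adapted to the previous σ-algebra
    (τ : ℕ → Ω → ℝ) (hτ_meas : ∀ t, 1 ≤ t → Measurable[F (t - 1)] (τ t)) :
    ∀ t, 1 ≤ t →
      (μ[fun ω' => robustGrad α ε K (τ t ω') (S t (Ytil t ω') ω')
            (fun y => S t y ω') | F (t - 1)]
        =ᵐ[μ]
          μ[fun ω' => (if S t (Y t ω') ω' ≤ τ t ω' then (1:ℝ) else 0) - (1 - α)
            | F (t - 1)]) ∧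
      (∀ᵐ ω ∂μ,
        (μ[fun ω' => robustGrad α ε K (τ t ω') (S t (Ytil t ω') ω')
              (fun y => S t y ω') | F (t - 1)]) ω ∈ Set.Icc (α - 1) α) := by
  
  obtain ⟨hε0, hε1⟩ := hε
  obtain ⟨hα0, hα1⟩ := hα
  have hK0 : (K : ℝ) ≠ 0 := Nat.cast_ne_zero.2 (by omega)
  have h1ε : (1 - ε) ≠ 0 := by linarith
  intro t ht
  have hGm : (F (t-1) : MeasurableSpace Ω) ≤ m0 := F.le _
  set φ : Ω → Fin K × (Fin K → ℝ) := fun ω => (Y t ω, fun y => S t y ω) with hφdef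
  have hφm0 : Measurable[m0] φ := by
    exact Measurable.prod ((hY_meas t ht).mono (F.le t) le_rfl)
      (measurable_pi_lambda _ fun y => (hS_meas t ht y).mono (F.le t) le_rfl)
  set H : MeasurableSpace Ω :=
    (F (t - 1) : MeasurableSpace Ω) ⊔ MeasurableSpace.comap φ inferInstance with hHdef
  have hHm : H ≤ m0 := sup_le hGm hφm0.comap_le
  letI : MeasurableSpace Ω := m0
  -- the key sets
  set Bs : Set Ω := {ω | S t (Y t ω) ω ≤ τ t ω} with hBsdef
  set Cs : Fin K → Set Ω := fun y => {ω | S t y ω ≤ τ t ω} with hCsdef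
  set UE : Set Ω := {ω | ε ≤ U t ω} with hUEdef
  set UL : Set Ω := {ω | U t ω < ε} with hULdef
  set Yb : Fin K → Set Ω := fun y => {ω | Ybar t ω = y} with hYbdef
  set Ds : Set Ω := {ω | S t (Ytil t ω) ω ≤ τ t ω} with hDsdef
  -- H-measurability
  have hφH : Measurable[H] φ := (comap_measurable φ).mono le_sup_right le_rfl
  have hτH : Measurable[H] (τ t) := (hτ_meas t ht).mono le_sup_left le_rfl
  have hSyH : ∀ y, Measurable[H] (fun ω => S t y ω) := fun y =>
    ((measurable_pi_apply y).comp measurable_snd).comp hφH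
  have hSYH : Measurable[H] (fun ω => S t (Y t ω) ω) := meas_eval.comp hφH
  have hBsH : MeasurableSet[H] Bs := measurableSet_le hSYH hτH
  have hCsH : ∀ y, MeasurableSet[H] (Cs y) := fun y => measurableSet_le (hSyH y) hτH
  have hBs : MeasurableSet[m0] Bs := hHm _ hBsH
  have hCs : ∀ y, MeasurableSet[m0] (Cs y) := fun y => hHm _ (hCsH y)
  have hUm0 : Measurable[m0] (U t) := (hU_meas t ht).mono (F.le t) le_rfl
  have hUE : MeasurableSet[m0] UE := measurableSet_le measurable_const hUm0
  have hUL : MeasurableSet[m0] UL := measurableSet_lt hUm0 measurable_const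
  have hYbm : ∀ y, MeasurableSet[m0] (Yb y) :=
    fun y => ((hYbar_meas t ht).mono (F.le t) le_rfl) (measurableSet_singleton y)
  -- decomposition of the noisy set
  have hDdecomp : Ds = (UE ∩ Bs) ∪ ⋃ y, ((UL ∩ Yb y) ∩ Cs y) := by
    ext ω
    simp only [hDsdef, hBsdef, hCsdef, hUEdef, hULdef, hYbdef, Set.mem_union, Set.mem_iUnion,
      Set.mem_inter_iff, Set.mem_setOf_eq]
    constructor
    · intro h
      by_cases hu : ε ≤ U t ω
      · exact Or.inl ⟨hu, by rwa [hYtil t ht ω, if_pos hu] at h⟩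
      · exact Or.inr ⟨Ybar t ω, ⟨not_le.1 hu, rfl⟩, by rwa [hYtil t ht ω, if_neg hu] at h⟩
    · rintro (⟨hu, hb⟩ | ⟨y, ⟨hu, hy⟩, hc⟩)
      · rwa [hYtil t ht ω, if_pos hu]
      · rw [hYtil t ht ω, if_neg (not_le.2 hu), hy]; exact hc
  have hDs : MeasurableSet[m0] Ds := by
    rw [hDdecomp]
    exact (hUE.inter hBs).union (MeasurableSet.iUnion fun y => ((hUL.inter (hYbm y)).inter (hCs y)))
  -- measures of the noise sets
  have hμUE : μ UE = ENNReal.ofReal (1 - ε) := by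
    have h1 : UE = U t ⁻¹' Set.Ici ε := rfl
    have h2 : Set.Ici ε ∩ Set.Icc (0:ℝ) 1 = Set.Icc ε 1 := by
      ext x
      simp only [Set.mem_inter_iff, Set.mem_Ici, Set.mem_Icc]
      constructor
      · rintro ⟨h1, _, h3⟩; exact ⟨h1, h3⟩
      · rintro ⟨h1, h2⟩; exact ⟨h1, le_trans hε0.le h1, h2⟩
    rw [h1, ← Measure.map_apply hUm0 measurableSet_Ici, hU_unif t ht,
      Measure.restrict_apply measurableSet_Ici, h2, Real.volume_Icc]
  have hμUL : μ UL = ENNReal.ofReal ε := by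
    have h1 : UL = U t ⁻¹' Set.Iio ε := rfl
    have h2 : Set.Iio ε ∩ Set.Icc (0:ℝ) 1 = Set.Ico 0 ε := by
      ext x
      simp only [Set.mem_inter_iff, Set.mem_Iio, Set.mem_Icc, Set.mem_Ico]
      constructor
      · rintro ⟨h1, h2, _⟩; exact ⟨h2, h1⟩
      · rintro ⟨h1, h2⟩; exact ⟨h2, h1, le_trans h2.le hε1.le⟩
    rw [h1, ← Measure.map_apply hUm0 measurableSet_Iio, hU_unif t ht,
      Measure.restrict_apply measurableSet_Iio, h2, Real.volume_Ico, sub_zero]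
  -- independence consequences
  have hI := hIndep t ht
  have hUEcm : MeasurableSet[MeasurableSpace.comap (U t) inferInstance] UE :=
    ⟨Set.Ici ε, measurableSet_Ici, rfl⟩
  have hULcm : MeasurableSet[MeasurableSpace.comap (U t) inferInstance] UL :=
    ⟨Set.Iio ε, measurableSet_Iio, rfl⟩
  have hYbcm : ∀ y, MeasurableSet[MeasurableSpace.comap (Ybar t) inferInstance] (Yb y) :=
    fun y => ⟨{y}, measurableSet_singleton y, rfl⟩
  have hUEH : ∀ B : Set Ω, MeasurableSet[H] B →
      μ (UE ∩ B) = ENNReal.ofReal (1 - ε) * μ B := by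
    intro B hB
    have h02 := hI.indep (i := 0) (j := 2) (by decide)
    rw [Indep_iff] at h02
    rw [h02 UE B hUEcm hB, hμUE]
  have hTriple : ∀ (y : Fin K) (B : Set Ω), MeasurableSet[H] B →
      μ ((UL ∩ Yb y) ∩ B) = ENNReal.ofReal ε * ((K : ENNReal)⁻¹ * μ B) := by
    intro y B hB
    have h := hI.meas_iInter (s := ![UL, Yb y, B]) ?_
    · have hiI : (⋂ i, (![UL, Yb y, B]) i) = (UL ∩ Yb y) ∩ B := by
        ext ω
        simp [Set.mem_iInter, Fin.forall_fin_succ, and_assoc]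
      rw [hiI] at h
      rw [h, Fin.prod_univ_three]
      simp only [Matrix.cons_val_zero, Matrix.cons_val_one, Matrix.head_cons,
        Matrix.cons_val_two, Matrix.tail_cons]
      rw [hμUL, hYbar_unif t ht y, mul_assoc]
    · intro i
      fin_cases i
      · exact hULcm
      · exact hYbcm y
      · exact hB
    -- the two functions
  set rg : Ω → ℝ := fun ω' => robustGrad α ε K (τ t ω') (S t (Ytil t ω') ω')
      (fun y => S t y ω') with hrgdef
  set clean : Ω → ℝ :=
    fun ω' => (if S t (Y t ω') ω' ≤ τ t ω' then (1:ℝ) else 0) - (1 - α) with hcleandef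
  -- integrability
  have hIntD : Integrable (fun ω => if S t (Ytil t ω) ω ≤ τ t ω then (1:ℝ) else 0) μ :=
    indc_integrable hDs
  have hIntB : Integrable (fun ω => if S t (Y t ω) ω ≤ τ t ω then (1:ℝ) else 0) μ :=
    indc_integrable hBs
  have hIntC : ∀ y, Integrable (fun ω => if S t y ω ≤ τ t ω then (1:ℝ) else 0) μ :=
    fun y => indc_integrable (hCs y)
  have hclean_int : Integrable clean μ := by
    rw [hcleandef]; exact hIntB.sub (integrable_const (μ := μ) (1 - α))
  have hIntD' : Integrable
      (fun ω => (if S t (Ytil t ω) ω ≤ τ t ω then (1:ℝ) else 0) - (1 - α)) μ := by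
    exact hIntD.sub (integrable_const (μ := μ) (1 - α))
  have hIntC' : ∀ y, Integrable
      (fun ω => (if S t y ω ≤ τ t ω then (1:ℝ) else 0) - (1 - α)) μ := fun y => by
    exact (hIntC y).sub (integrable_const (μ := μ) (1 - α))
  have hsum_int : Integrable
      (fun ω => ∑ y : Fin K, ((if S t y ω ≤ τ t ω then (1:ℝ) else 0) - (1 - α))) μ :=
    integrable_finset_sum _ fun y _ => hIntC' y
  have hrg_int : Integrable rg μ := by
    rw [hrgdef]
    simp only [robustGrad]
    exact (hIntD'.const_mul _).sub (hsum_int.const_mul _)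
  -- the key set-integral identity
  have key : ∀ A : Set Ω, MeasurableSet[(F (t-1) : MeasurableSpace Ω)] A →
      ∫ ω in A, rg ω ∂μ = ∫ ω in A, clean ω ∂μ := by
    intro A hA
    have hAH : MeasurableSet[H] A :=
      (le_sup_left : (F (t-1) : MeasurableSpace Ω) ≤ H) _ hA
    have hAm0 : MeasurableSet[m0] A := hGm _ hA
    have hBA : MeasurableSet[H] (Bs ∩ A) := hBsH.inter hAH
    have hCA : ∀ y, MeasurableSet[H] (Cs y ∩ A) := fun y => (hCsH y).inter hAH
    -- measure of Ds ∩ A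
    have hsetEq : Ds ∩ A = (UE ∩ (Bs ∩ A)) ∪ ⋃ y, ((UL ∩ Yb y) ∩ (Cs y ∩ A)) := by
      rw [hDdecomp]
      ext ω
      simp only [Set.mem_inter_iff, Set.mem_union, Set.mem_iUnion]
      tauto
    have hdisj1 : Disjoint (UE ∩ (Bs ∩ A)) (⋃ y, ((UL ∩ Yb y) ∩ (Cs y ∩ A))) := by
      rw [Set.disjoint_left]
      rintro ω ⟨h1, -⟩ h2
      simp only [Set.mem_iUnion, Set.mem_inter_iff] at h2
      obtain ⟨y, ⟨⟨hu, -⟩, -⟩⟩ := h2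
      simp only [hUEdef, Set.mem_setOf_eq] at h1
      exact (not_le.2 hu) h1
    have hdisj2 : Pairwise (Function.onFun Disjoint
        (fun y => ((UL ∩ Yb y) ∩ (Cs y ∩ A)))) := by
      intro y z hyz
      rw [Function.onFun, Set.disjoint_left]
      rintro ω ⟨⟨-, hy⟩, -⟩ ⟨⟨-, hz⟩, -⟩
      exact hyz (hy.symm.trans hz)
    have hmeasD : μ (Ds ∩ A) = ENNReal.ofReal (1 - ε) * μ (Bs ∩ A)
        + ∑ y : Fin K, ENNReal.ofReal ε * ((K : ENNReal)⁻¹ * μ (Cs y ∩ A)) := by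
      rw [hsetEq, measure_union hdisj1
        (MeasurableSet.iUnion fun y => ((hUL.inter (hYbm y)).inter ((hCs y).inter hAm0))),
        measure_iUnion hdisj2
          (fun y => ((hUL.inter (hYbm y)).inter ((hCs y).inter hAm0))),
        hUEH _ hBA, tsum_fintype]
      congr 1
      exact Finset.sum_congr rfl fun y _ => hTriple y _ (hCA y)
    -- pass to real numbers
    set a : ℝ := (μ A).toReal with hadef
    set b : ℝ := (μ (Bs ∩ A)).toReal with hbdef
    set c : Fin K → ℝ := fun y => (μ (Cs y ∩ A)).toReal with hcdef
    have hDtoReal : (μ (Ds ∩ A)).toReal = (1 - ε) * b + ∑ y : Fin K, ε * ((K:ℝ)⁻¹ * c y) := by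
      rw [hmeasD, ENNReal.toReal_add
        (ENNReal.mul_ne_top ENNReal.ofReal_ne_top (measure_ne_top μ _))
        (ENNReal.sum_ne_top.2 fun y _ => ENNReal.mul_ne_top ENNReal.ofReal_ne_top
          (ENNReal.mul_ne_top (by simp; omega) (measure_ne_top μ _))),
        ENNReal.toReal_mul, ENNReal.toReal_ofReal (by linarith : (0:ℝ) ≤ 1 - ε),
        ENNReal.toReal_sum (fun y _ => ENNReal.mul_ne_top ENNReal.ofReal_ne_top
          (ENNReal.mul_ne_top (by simp; omega) (measure_ne_top μ _)))]
      congr 1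
      refine Finset.sum_congr rfl fun y _ => ?_
      rw [ENNReal.toReal_mul, ENNReal.toReal_mul, ENNReal.toReal_ofReal hε0.le,
        ENNReal.toReal_inv, ENNReal.toReal_natCast]
    -- compute the clean integral
    have hIclean : ∫ ω in A, clean ω ∂μ = b - a * (1 - α) := by
      rw [hcleandef]
      have hIntB' : Integrable
          (fun ω => (if S t (Y t ω) ω ≤ τ t ω then (1:ℝ) else 0) - (1 - α)) μ := by
        exact hIntB.sub (integrable_const (μ := μ) (1 - α))
      rw [integral_sub hIntB.integrableOn (integrable_const (μ := μ) (1 - α)).integrableOn]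
      rw [indc_setIntegral (μ := μ) (P := fun ω => S t (Y t ω) ω ≤ τ t ω) hBs,
        setIntegral_const, smul_eq_mul]
      rfl
    -- compute the robust integral
    have hIrg : ∫ ω in A, rg ω ∂μ
        = (1/(1-ε)) * (((1-ε) * b + ∑ y : Fin K, ε * ((K:ℝ)⁻¹ * c y)) - a * (1-α))
          - (ε/((K:ℝ)*(1-ε))) * ∑ y : Fin K, (c y - a * (1-α)) := by
      rw [hrgdef]
      simp only [robustGrad]
      rw [integral_sub (hIntD'.const_mul _).integrableOn
          (hsum_int.const_mul _).integrableOn]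
      rw [integral_const_mul, integral_const_mul]
      rw [integral_sub hIntD.integrableOn (integrable_const (μ := μ) (1 - α)).integrableOn]
      rw [indc_setIntegral (μ := μ) (P := fun ω => S t (Ytil t ω) ω ≤ τ t ω) hDs]
      rw [setIntegral_const, smul_eq_mul, hDtoReal]
      rw [integral_finset_sum _ (fun y _ => (hIntC' y).integrableOn)]
      congr 2
      refine Finset.sum_congr rfl fun y _ => ?_
      rw [integral_sub (hIntC y).integrableOn (integrable_const (μ := μ) (1 - α)).integrableOn,
        indc_setIntegral (μ := μ) (P := fun ω => S t y ω ≤ τ t ω) (hCs y),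
        setIntegral_const, smul_eq_mul]
      rfl
    rw [hIrg, hIclean]
    rw [Finset.sum_sub_distrib, Finset.sum_const, Finset.card_univ, Fintype.card_fin,
      nsmul_eq_mul, ← Finset.mul_sum, ← Finset.mul_sum]
    field_simp
    ring
  -- conclude the conditional expectation equality
  have hcondeq : (μ[clean | F (t-1)]) =ᵐ[μ] (μ[rg | F (t-1)]) := by
    refine ae_eq_condExp_of_forall_setIntegral_eq hGm hrg_int
      (fun s hs _ => integrable_condExp.integrableOn)
      (fun s hs hμs => ?_)
      (StronglyMeasurable.aestronglyMeasurable stronglyMeasurable_condExp)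
    rw [setIntegral_condExp hGm hclean_int hs]
    exact (key s hs).symm
  refine ⟨hcondeq.symm, ?_⟩
  have hub : (μ[clean | F (t-1)]) ≤ᵐ[μ] fun _ => α := by
    have h := condExp_mono (μ := μ) (m := F (t-1)) hclean_int (integrable_const (μ := μ) α)
      (ae_of_all _ fun ω => ?_)
    · rwa [condExp_const hGm] at h
    · simp only [hcleandef]
      split_ifs <;> linarith
  have hlb : (fun _ => α - 1) ≤ᵐ[μ] (μ[clean | F (t-1)]) := by
    have h := condExp_mono (μ := μ) (m := F (t-1)) (integrable_const (μ := μ) (α - 1)) hclean_int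
      (ae_of_all _ fun ω => ?_)
    · rwa [condExp_const hGm] at h
    · simp only [hcleandef]
      split_ifs <;> linarith
  filter_upwards [hcondeq, hub, hlb] with ω h1 h2 h3
  exact ⟨h1 ▸ h3, h1 ▸ h2⟩
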